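/- Let R be a Noetherian integral domain with field of fractions K, let E be a finitely generated free R-module, and let W be a K-linear subspace of K ⊗_R E. Let F := {e ∈ E : e ⊗ 1 ∈ W} be the preimage of W under the canonical map E → K ⊗_R E. Then: (1) the quotient E/F is a torsion-free R-module; (2) W equals the K-linear span of the image of F in K ⊗_R E; (3) F is the unique R-submodule of E with these two properties, i.e. if F' ⊆ E is a submodule such that E/F' is torsion-free and the K-span of the image of F' in K ⊗_R E equals W, then F' = F; and (4) F is a reflexive R-module, i.e. the canonical evaluation map from F to its double R-dual Hom_R(Hom_R(F,R),R) is bijective. -/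

import Mathlib

open TensorProduct

section aux

variable {R : Type*} [CommRing R] [IsDomain R]
variable {K : Type*} [Field K] [Algebra R K] [IsFractionRing R K]

lemma aux_denom_surj {M : Type*} [AddCommGroup M] [Module R M] (x : K ⊗[R] M) :
    ∃ (d : R) (m : M), d ≠ 0 ∧ (algebraMap R K d) • x = 1 ⊗ₜ[R] m := by
  induction x using TensorProduct.induction_on with
  | zero => exact ⟨1, 0, one_ne_zero, by simp⟩
  | tmul k m =>
      obtain ⟨⟨a, s⟩, hs⟩ := IsLocalization.surj (nonZeroDivisors R) k
      refine ⟨s, a • m, nonZeroDivisors.coe_ne_zero s, ?_⟩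
      rw [smul_tmul', smul_eq_mul, mul_comm, hs, tmul_smul, smul_tmul', Algebra.smul_def, mul_one]
  | add x y hx hy =>
      obtain ⟨d₁, m₁, hd₁, h₁⟩ := hx
      obtain ⟨d₂, m₂, hd₂, h₂⟩ := hy
      refine ⟨d₁ * d₂, d₂ • m₁ + d₁ • m₂, mul_ne_zero hd₁ hd₂, ?_⟩
      rw [tmul_add, map_mul, smul_add]
      congr 1
      · rw [mul_comm, mul_smul, h₁, tmul_smul, algebraMap_smul]
      · rw [mul_smul, h₂, tmul_smul, algebraMap_smul]

lemma aux_denom_map {E : Type*} [AddCommGroup E] [Module R E] [Module.Finite R E]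
    (ξ' : E →ₗ[R] K) :
    ∃ (s : R) (ξ : E →ₗ[R] R), s ≠ 0 ∧ ∀ e, algebraMap R K (ξ e) = algebraMap R K s * ξ' e := by
  obtain ⟨S, hS⟩ := Module.Finite.fg_top (R := R) (M := E)
  obtain ⟨b, hb⟩ := IsLocalization.exist_integer_multiples (nonZeroDivisors R) S (fun e => ξ' e)
  set L : E →ₗ[R] K := (b : R) • ξ' with hL
  have hinj : Function.Injective (Algebra.linearMap R K) := IsFractionRing.injective R K
  have htop : Submodule.comap L (LinearMap.range (Algebra.linearMap R K)) = ⊤ := by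
    rw [← top_le_iff, ← hS, Submodule.span_le]
    intro e he
    obtain ⟨r, hr⟩ := hb e he
    exact ⟨r, hr⟩
  have hmem : ∀ e, L e ∈ LinearMap.range (Algebra.linearMap R K) := by
    intro e
    have : e ∈ Submodule.comap L (LinearMap.range (Algebra.linearMap R K)) := htop ▸ trivial
    exact this
  set eqv := LinearEquiv.ofInjective (Algebra.linearMap R K) hinj
  refine ⟨b, eqv.symm.toLinearMap ∘ₗ L.codRestrict _ hmem,
    nonZeroDivisors.coe_ne_zero b, fun e => ?_⟩
  have h1 : (eqv ((eqv.symm) (L.codRestrict _ hmem e)) : K) = L e := by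
    rw [eqv.apply_symm_apply]; rfl
  rw [LinearEquiv.ofInjective_apply] at h1
  simpa [hL, LinearMap.smul_apply, Algebra.smul_def] using h1

lemma aux_f_inj {E : Type*} [AddCommGroup E] [Module R E] [Module.Free R E]
    (f : E →ₗ[R] K ⊗[R] E) (hf : ∀ e : E, f e = 1 ⊗ₜ[R] e) :
    Function.Injective f := by
  rw [injective_iff_map_eq_zero]
  intro e he
  rw [hf] at he
  set b := Module.Free.chooseBasis R E
  have hrep : ∀ i, (b.baseChange K).repr (1 ⊗ₜ[R] e) i = algebraMap R K (b.repr e i) := by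
    intro i
    rw [Module.Basis.baseChange_repr_tmul, Algebra.smul_def, mul_one]
  have : ∀ i, b.repr e i = 0 := by
    intro i
    have := hrep i
    rw [he] at this
    simp only [map_zero, Finsupp.coe_zero, Pi.zero_apply] at this
    exact IsFractionRing.injective R K (by rw [← this, map_zero])
  have : b.repr e = 0 := Finsupp.ext fun i => this i
  simpa using congrArg b.repr.symm this

end aux

section aux2

variable {R : Type*} [CommRing R] [IsDomain R]
variable {K : Type*} [Field K] [Algebra R K] [IsFractionRing R K]

lemma aux_span_denom {E : Type*} [AddCommGroup E] [Module R E]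
    (f : E →ₗ[R] K ⊗[R] E) (F' : Submodule R E) {x : K ⊗[R] E}
    (hx : x ∈ Submodule.span K (f '' (F' : Set E))) :
    ∃ (d : R) (y : E), d ≠ 0 ∧ y ∈ F' ∧ (algebraMap R K d) • x = f y := by
  induction hx using Submodule.span_induction with
  | mem x h =>
      obtain ⟨y, hy, rfl⟩ := h
      exact ⟨1, y, one_ne_zero, hy, by simp⟩
  | zero => exact ⟨1, 0, one_ne_zero, zero_mem _, by simp⟩
  | add x y hx hy ihx ihy =>
      obtain ⟨d₁, y₁, hd₁, hy₁, h₁⟩ := ihx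
      obtain ⟨d₂, y₂, hd₂, hy₂, h₂⟩ := ihy
      refine ⟨d₁ * d₂, d₂ • y₁ + d₁ • y₂, mul_ne_zero hd₁ hd₂,
        F'.add_mem (F'.smul_mem _ hy₁) (F'.smul_mem _ hy₂), ?_⟩
      rw [map_add, map_smul, map_smul, map_mul, smul_add]
      congr 1
      · rw [mul_comm, mul_smul, h₁, algebraMap_smul]
      · rw [mul_smul, h₂, algebraMap_smul]
  | smul k x hx ih =>
      obtain ⟨d, y, hd, hy, h⟩ := ih
      obtain ⟨⟨a, s⟩, hs⟩ := IsLocalization.surj (nonZeroDivisors R) k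
      refine ⟨s * d, a • y, mul_ne_zero (nonZeroDivisors.coe_ne_zero s) hd,
        F'.smul_mem _ hy, ?_⟩
      rw [map_mul, mul_smul, smul_comm (algebraMap R K (d : R)) k, h, smul_smul,
        mul_comm, hs, algebraMap_smul, ← map_smul]

lemma aux_dual_extend {E : Type*} [AddCommGroup E] [Module R E] [Module.Free R E]
    [Module.Finite R E]
    (f : E →ₗ[R] K ⊗[R] E) (hf : ∀ e : E, f e = 1 ⊗ₜ[R] e)
    (F : Submodule R E) (ψ : Module.Dual R F) :
    ∃ (s : R) (ξ : Module.Dual R E), s ≠ 0 ∧ ∀ y : F, ξ y = s * ψ y := by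
  have halg : Function.Injective (algebraMap R K) := IsFractionRing.injective R K
  set j := (F.subtype).baseChange K with hjdef
  have hj : LinearMap.ker j = ⊥ := by
    rw [LinearMap.ker_eq_bot']
    intro z hz
    obtain ⟨d, m, hd, hdm⟩ := aux_denom_surj z
    have h1 : f (m : E) = 0 := by
      rw [hf]
      have : j ((algebraMap R K d) • z) = 1 ⊗ₜ[R] (m : E) := by
        rw [hdm, hjdef, LinearMap.baseChange_tmul]; rfl
      rw [map_smul, hz, smul_zero] at this
      exact this.symm
    have hm : (m : E) = 0 := aux_f_inj f hf (by simpa using h1)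
    have hm0 : m = 0 := Subtype.ext hm
    rw [hm0, tmul_zero] at hdm
    have := (smul_eq_zero.mp hdm).resolve_left ((map_ne_zero_iff _ halg).mpr hd)
    exact this
  obtain ⟨p, hp⟩ := j.exists_leftInverse_of_injective hj
  set Ψ : K ⊗[R] R →ₗ[K] K := (Algebra.TensorProduct.rid R K K).toLinearMap
  set Ξ : K ⊗[R] E →ₗ[K] K := (Ψ ∘ₗ LinearMap.baseChange K ψ) ∘ₗ p
  set ξ' : E →ₗ[R] K := (Ξ.restrictScalars R) ∘ₗ f with hξ'def
  obtain ⟨s, ξ, hs, hξ⟩ := aux_denom_map ξ'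
  refine ⟨s, ξ, hs, fun y => ?_⟩
  have h2 : ξ' (y : E) = algebraMap R K (ψ y) := by
    have hfy : f (y : E) = j (1 ⊗ₜ[R] y) := by
      rw [hf, hjdef, LinearMap.baseChange_tmul]; rfl
    have hpy : p (j (1 ⊗ₜ[R] y)) = 1 ⊗ₜ[R] y := by
      have := congrArg (fun g => g (1 ⊗ₜ[R] y)) hp
      simpa using this
    show Ξ (f (y : E)) = _
    rw [hfy]
    show Ψ (LinearMap.baseChange K ψ (p (j (1 ⊗ₜ[R] y)))) = _
    rw [hpy, LinearMap.baseChange_tmul]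
    show (Algebra.TensorProduct.rid R K K) (1 ⊗ₜ[R] (ψ y)) = _
    rw [Algebra.TensorProduct.rid_tmul, Algebra.smul_def, mul_one]
  apply halg
  rw [hξ, h2, ← map_mul]

lemma aux_dual_vanish {E : Type*} [AddCommGroup E] [Module R E] [Module.Finite R E]
    (f : E →ₗ[R] K ⊗[R] E) (W : Submodule K (K ⊗[R] E)) (F : Submodule R E)
    (hFW : ∀ y ∈ F, f y ∈ W) {x : E} (hx : f x ∉ W) :
    ∃ ξ : Module.Dual R E, (∀ y ∈ F, ξ y = 0) ∧ ξ x ≠ 0 := by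
  have halg : Function.Injective (algebraMap R K) := IsFractionRing.injective R K
  have hq : W.mkQ (f x) ≠ 0 := by
    rw [Submodule.mkQ_apply, Ne, Submodule.Quotient.mk_eq_zero]
    exact hx
  obtain ⟨lam, hlam⟩ : ∃ lam : Module.Dual K ((K ⊗[R] E) ⧸ W), lam (W.mkQ (f x)) ≠ 0 := by
    by_contra h
    push_neg at h
    exact hq ((Module.forall_dual_apply_eq_zero_iff K _).mp h)
  set Ξ : K ⊗[R] E →ₗ[K] K := lam ∘ₗ W.mkQ with hΞdef
  set ξ' : E →ₗ[R] K := (Ξ.restrictScalars R) ∘ₗ f with hξ'def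
  obtain ⟨s, ξ, hs, hξ⟩ := aux_denom_map ξ'
  have hsK : algebraMap R K s ≠ 0 := (map_ne_zero_iff _ halg).mpr hs
  refine ⟨ξ, fun y hy => ?_, fun h0 => ?_⟩
  · apply halg
    rw [hξ, map_zero]
    have : Ξ (f y) = 0 := by
      show lam (W.mkQ (f y)) = 0
      rw [Submodule.mkQ_apply, (Submodule.Quotient.mk_eq_zero W).mpr (hFW y hy), map_zero]
    show algebraMap R K s * ξ' y = 0
    show algebraMap R K s * Ξ (f y) = 0
    rw [this, mul_zero]
  · have := hξ x
    rw [h0, map_zero] at this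
    have h1 : ξ' x = Ξ (f x) := rfl
    have h2 : Ξ (f x) = lam (W.mkQ (f x)) := rfl
    rw [h1, h2] at this
    exact hlam (by
      rcases mul_eq_zero.mp this.symm with h | h
      · exact absurd h hsK
      · exact h)

end aux2

/-- For a Noetherian integral domain `R` with fraction field `K`, a finite free
`R`-module `E`, and a `K`-subspace `W` of `K ⊗[R] E`, the preimage `F` of `W` under the
canonical map `e ↦ 1 ⊗ e` has torsion-free quotient, `K`-spans `W`, is the unique such
submodule, and is reflexive. -/
theorem stmt_0 (R : Type*) [CommRing R] [IsDomain R] [IsNoetherianRing R]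
    (K : Type*) [Field K] [Algebra R K] [IsFractionRing R K]
    (E : Type*) [AddCommGroup E] [Module R E] [Module.Free R E] [Module.Finite R E]
    (W : Submodule K (K ⊗[R] E))
    (f : E →ₗ[R] K ⊗[R] E) (hf : ∀ e : E, f e = 1 ⊗ₜ[R] e)
    (F : Submodule R E) (hF : F = (W.restrictScalars R).comap f) :
    (∀ (r : R) (q : E ⧸ F), r • q = 0 → r ≠ 0 → q = 0) ∧
    Submodule.span K (f '' (F : Set E)) = W ∧
    (∀ F' : Submodule R E,
      (∀ (r : R) (q : E ⧸ F'), r • q = 0 → r ≠ 0 → q = 0) →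
      Submodule.span K (f '' (F' : Set E)) = W → F' = F) ∧
    Module.IsReflexive R F := by
  have halg : Function.Injective (algebraMap R K) := IsFractionRing.injective R K
  have hfinj : Function.Injective f := aux_f_inj f hf
  have hmemF : ∀ e : E, e ∈ F ↔ f e ∈ W := by
    intro e
    rw [hF, Submodule.mem_comap, Submodule.restrictScalars_mem]
  have part1 : ∀ (r : R) (q : E ⧸ F), r • q = 0 → r ≠ 0 → q = 0 := by
    intro r q hrq hr
    obtain ⟨e, rfl⟩ := Submodule.Quotient.mk_surjective F q
    rw [← Submodule.Quotient.mk_smul, Submodule.Quotient.mk_eq_zero] at hrq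
    rw [Submodule.Quotient.mk_eq_zero]
    rw [hmemF] at hrq ⊢
    have heq : f (r • e) = (algebraMap R K r) • f e := by rw [map_smul, algebraMap_smul]
    rw [heq] at hrq
    have hrK : algebraMap R K r ≠ 0 := (map_ne_zero_iff _ halg).mpr hr
    have := W.smul_mem (algebraMap R K r)⁻¹ hrq
    rwa [inv_smul_smul₀ hrK] at this
  have part2 : Submodule.span K (f '' (F : Set E)) = W := by
    apply le_antisymm
    · rw [Submodule.span_le]
      rintro _ ⟨e, he, rfl⟩
      exact (hmemF e).mp he
    · intro w hw
      obtain ⟨d, m, hd, hdm⟩ := aux_denom_surj w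
      have hfm : f m = (algebraMap R K d) • w := by rw [hf]; exact hdm.symm
      have hWm : f m ∈ W := by rw [hfm]; exact W.smul_mem _ hw
      have hm : m ∈ F := (hmemF m).mpr hWm
      have hsp : f m ∈ Submodule.span K (f '' (F : Set E)) :=
        Submodule.subset_span ⟨m, hm, rfl⟩
      have h2 := Submodule.smul_mem _ (algebraMap R K d)⁻¹ hsp
      rwa [hfm, inv_smul_smul₀ ((map_ne_zero_iff _ halg).mpr hd)] at h2
  refine ⟨part1, part2, ?_, ?_⟩
  · intro F' htf hspan
    apply le_antisymm
    · intro e he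
      rw [hmemF, ← hspan]
      exact Submodule.subset_span ⟨e, he, rfl⟩
    · intro e he
      have hfe : f e ∈ Submodule.span K (f '' (F' : Set E)) := by
        rw [hspan]; exact (hmemF e).mp he
      obtain ⟨d, y, hd, hy, hdy⟩ := aux_span_denom f F' hfe
      have heq : f (d • e) = f y := by
        rw [map_smul, ← algebraMap_smul (A := K) d (f e), hdy]
      have hde : d • e = y := hfinj heq
      have hq0 : d • (Submodule.Quotient.mk e : E ⧸ F') = 0 := by
        rw [← Submodule.Quotient.mk_smul, Submodule.Quotient.mk_eq_zero, hde]
        exact hy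
      have := htf d _ hq0 hd
      rwa [Submodule.Quotient.mk_eq_zero] at this
  · constructor
    constructor
    · rw [injective_iff_map_eq_zero]
      intro x hx
      by_contra hx0
      have hxE : (x : E) ≠ 0 := fun h => hx0 (Subtype.ext h)
      set b := Module.Free.chooseBasis R E with hb
      have hnot : ¬ ∀ i, b.coord i (x : E) = 0 := by
        rw [b.forall_coord_eq_zero_iff]; exact hxE
      push_neg at hnot
      obtain ⟨i, hi⟩ := hnot
      have := congrArg (fun g => g ((b.coord i) ∘ₗ F.subtype)) hx
      exact hi (by simpa using this)
    · intro φ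
      set res : Module.Dual R E →ₗ[R] Module.Dual R F := (F.subtype).dualMap with hres
      obtain ⟨x, hx⟩ := (Module.bijective_dual_eval R E).2 (res.dualMap φ)
      have hxφ : ∀ ξ : Module.Dual R E, ξ x = φ (res ξ) := by
        intro ξ
        have := congrArg (fun g => g ξ) hx
        simpa using this
      have hxF : x ∈ F := by
        rw [hmemF]
        by_contra hxW
        obtain ⟨ξ, hξF, hξx⟩ := aux_dual_vanish f W F (fun y hy => (hmemF y).mp hy) hxW
        have hres0 : res ξ = 0 := by
          ext y
          exact hξF y y.2
        have := hxφ ξ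
        rw [hres0, map_zero] at this
        exact hξx this
      refine ⟨⟨x, hxF⟩, ?_⟩
      apply LinearMap.ext
      intro ψ
      obtain ⟨s, ξ, hs, hξ⟩ := aux_dual_extend f hf F ψ
      have hres2 : res ξ = s • ψ := by
        ext y
        rw [LinearMap.smul_apply]
        show ξ (y : E) = s • ψ y
        rw [hξ y, smul_eq_mul]
      have h1 : ξ x = s * φ ψ := by
        rw [hxφ, hres2, map_smul, smul_eq_mul]
      have h2 : ξ x = s * ψ ⟨x, hxF⟩ := hξ ⟨x, hxF⟩
      have h3 := mul_left_cancel₀ hs (h1.symm.trans h2)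
      show ψ ⟨x, hxF⟩ = φ ψ
      exact h3.symm
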